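/- Steklov's inequality: let L > 0 and let v : [0,L] → ℝ be continuous on [0,L], continuously differentiable on (0,L) with v' square-integrable, and satisfy v(0) = v(L) = 0. Then (π²/L²) ∫₀ᴸ v(x)² dx ≤ ∫₀ᴸ v'(x)² dx. -/

import Mathlib

open MeasureTheory Set Filter Topology

lemma steklov_alg {s c k V V' : ℝ} (hs : s ≠ 0) (h1 : s^2 + c^2 = 1) :
    2*k*(c/s)*V*V' - k^2*V^2/s^2
      = k * ((-s*k*s - c*(c*k))/s^2) * V^2 + k*(c/s)*(2*V*V') := by
  field_simp
  linear_combination (k^2*V^2) * h1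

lemma steklov_alg2 {s c k V V' : ℝ} (hs : s ≠ 0) (h1 : s^2 + c^2 = 1) :
    V'^2 - k^2*V^2 - (2*k*(c/s)*V*V' - k^2*V^2/s^2) = (V' - k*(c/s)*V)^2 := by
  field_simp
  linear_combination (-k^2*V^2) * h1

lemma steklov_cot_le {t : ℝ} (ht : 0 < t) (ht2 : t < Real.pi/2) :
    Real.cos t / Real.sin t ≤ 1 / t := by
  have hc : 0 < Real.cos t := Real.cos_pos_of_mem_Ioo ⟨by linarith [Real.pi_pos], ht2⟩
  have hs : 0 < Real.sin t := Real.sin_pos_of_pos_of_lt_pi ht (by linarith [Real.pi_pos])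
  have htan := Real.lt_tan ht ht2
  rw [Real.tan_eq_sin_div_cos] at htan
  rw [div_le_div_iff₀ hs ht]
  nlinarith [(lt_div_iff₀ hc).1 htan]

lemma steklov_cs {a b : ℝ} (hab : a < b) {f : ℝ → ℝ}
    (hmeas : AEStronglyMeasurable f (volume.restrict (Ioo a b)))
    (hint : IntegrableOn (fun x => f x ^ 2) (Ioo a b)) :
    (∫ x in Ioo a b, f x) ^ 2 ≤ (b - a) * ∫ x in Ioo a b, f x ^ 2 := by
  haveI : IsFiniteMeasure (volume.restrict (Ioo a b)) :=
    ⟨by rw [Measure.restrict_apply_univ, Real.volume_Ioo]; exact ENNReal.ofReal_lt_top⟩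
  have h2 : (2:ℝ).HolderConjugate 2 := Real.HolderConjugate.two_two
  have habs : IntegrableOn (fun x => |f x| ^ 2) (Ioo a b) := by
    simpa [sq_abs] using hint
  have hmem : MemLp (fun x => |f x|) 2 (volume.restrict (Ioo a b)) :=
    (memLp_two_iff_integrable_sq (by simpa [Real.norm_eq_abs] using hmeas.norm)).2 habs
  have hone : MemLp (fun _ : ℝ => (1:ℝ)) 2 (volume.restrict (Ioo a b)) := memLp_const 1
  have key := MeasureTheory.integral_mul_le_Lp_mul_Lq_of_nonneg h2
    (f := fun x => |f x|) (g := fun _ => (1:ℝ))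
    (Filter.Eventually.of_forall fun x => abs_nonneg _)
    (Filter.Eventually.of_forall fun x => zero_le_one)
    (by simpa using hmem) (by simpa using hone)
  simp only [mul_one, Real.one_rpow] at key
  have hvol : ∫ x in Ioo a b, (1:ℝ) = b - a := by
    simp [Real.volume_Ioo, ENNReal.toReal_ofReal (sub_pos.2 hab).le, hab.le]
  rw [hvol] at key
  have h1 : |∫ x in Ioo a b, f x| ≤ ∫ x in Ioo a b, |f x| := by
    simpa using norm_integral_le_integral_norm (μ := volume.restrict (Ioo a b)) f
  have habs2 : ∫ x in Ioo a b, |f x| ^ (2:ℝ) = ∫ x in Ioo a b, f x ^ 2 := by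
    refine integral_congr_ae (Filter.Eventually.of_forall fun x => ?_)
    simp only [Real.rpow_two, sq_abs]
  rw [habs2] at key
  have hnn : 0 ≤ ∫ x in Ioo a b, f x ^ 2 :=
    integral_nonneg fun x => sq_nonneg _
  calc (∫ x in Ioo a b, f x) ^ 2 = |∫ x in Ioo a b, f x| ^ 2 := (sq_abs _).symm
    _ ≤ ((∫ x in Ioo a b, f x ^ 2) ^ (1/(2:ℝ)) * (b - a) ^ (1/(2:ℝ))) ^ 2 := by
        apply pow_le_pow_left₀ (abs_nonneg _)
        exact h1.trans key
    _ = (b - a) * ∫ x in Ioo a b, f x ^ 2 := by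
        rw [mul_pow, ← Real.rpow_natCast (_ ^ (1/(2:ℝ))) 2,
          ← Real.rpow_natCast ((b-a) ^ (1/(2:ℝ))) 2,
          ← Real.rpow_mul hnn, ← Real.rpow_mul (sub_pos.2 hab).le]
        norm_num
        rw [mul_comm]

/-- **Steklov's inequality.** If `v` is continuous on `[0, L]`, continuously differentiable
on `(0, L)` with square-integrable derivative, and `v 0 = v L = 0`, then
`(π² / L²) ∫₀ᴸ v² ≤ ∫₀ᴸ (v')²`. -/
theorem steklov_inequality (L : ℝ) (hL : 0 < L) (v v' : ℝ → ℝ)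
    (hv : ContinuousOn v (Icc 0 L))
    (hderiv : ∀ x ∈ Ioo 0 L, HasDerivAt v (v' x) x)
    (hv' : ContinuousOn v' (Ioo 0 L))
    (hint : IntegrableOn (fun x => v' x ^ 2) (Ioo 0 L))
    (h0 : v 0 = 0) (hLv : v L = 0) :
    (Real.pi ^ 2 / L ^ 2) * ∫ x in Ioo 0 L, v x ^ 2 ≤ ∫ x in Ioo 0 L, v' x ^ 2 := by
  set k := Real.pi / L with hk
  set F : ℝ → ℝ := fun x => k * (Real.cos (k*x) / Real.sin (k*x)) * v x ^ 2 with hFdef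
  set Fd : ℝ → ℝ := fun x =>
    2*k*(Real.cos (k*x)/Real.sin (k*x))*(v x)*(v' x) - k^2 * v x ^2 / Real.sin (k*x)^2 with hFd
  have hkpos : 0 < k := by rw [hk]; exact div_pos Real.pi_pos hL
  have hkL : k * L = Real.pi := by rw [hk]; field_simp
  clear_value k F Fd
  have hsin : ∀ x ∈ Ioo 0 L, 0 < Real.sin (k*x) := by
    intro x hx
    apply Real.sin_pos_of_pos_of_lt_pi (mul_pos hkpos hx.1)
    rw [← hkL]
    exact mul_lt_mul_of_pos_left hx.2 hkpos
  -- derivative of F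
  have hFderiv : ∀ x ∈ Ioo 0 L, HasDerivAt F (Fd x) x := by
    intro x hx
    have hsne : Real.sin (k*x) ≠ 0 := (hsin x hx).ne'
    have hkx : HasDerivAt (fun y : ℝ => k * y) k x := by
      simpa using (hasDerivAt_id x).const_mul k
    have hs : HasDerivAt (fun y => Real.sin (k*y)) (Real.cos (k*x) * k) x :=
      (Real.hasDerivAt_sin (k*x)).comp x hkx
    have hc : HasDerivAt (fun y => Real.cos (k*y)) (-Real.sin (k*x) * k) x :=
      (Real.hasDerivAt_cos (k*x)).comp x hkx
    have hq : HasDerivAt (fun y => Real.cos (k*y) / Real.sin (k*y))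
        ((-Real.sin (k*x) * k * Real.sin (k*x) - Real.cos (k*x) * (Real.cos (k*x) * k)) /
          Real.sin (k*x) ^ 2) x := hc.div hs hsne
    have hq2 := hq.const_mul k
    have hv2 : HasDerivAt (fun y => v y ^ 2) (2 * v x * v' x) x := by
      have := (hderiv x hx).fun_pow 2
      simpa [mul_comm, mul_assoc] using this
    have h' := hq2.fun_mul hv2
    have h1 : Real.sin (k*x)^2 + Real.cos (k*x)^2 = 1 := Real.sin_sq_add_cos_sq _
    have halg := steklov_alg (k := k) (V := v x) (V' := v' x) hsne h1
    rw [hFdef]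
    refine h'.congr_deriv ?_
    rw [hFd]
    exact halg.symm
  -- pointwise inequality
  have hFle : ∀ x ∈ Ioo 0 L, Fd x ≤ v' x ^2 - k^2 * v x ^2 := by
    intro x hx
    have hsne : Real.sin (k*x) ≠ 0 := (hsin x hx).ne'
    have h1 : Real.sin (k*x)^2 + Real.cos (k*x)^2 = 1 := Real.sin_sq_add_cos_sq _
    have hD := steklov_alg2 (k := k) (V := v x) (V' := v' x) hsne h1
    have hsq := sq_nonneg (v' x - k*(Real.cos (k*x)/Real.sin (k*x))*(v x))
    have hgoal : 2*k*(Real.cos (k*x)/Real.sin (k*x))*(v x)*(v' x)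
        - k^2 * v x ^2 / Real.sin (k*x)^2 ≤ v' x ^2 - k^2 * v x ^2 := by linarith
    rw [hFd]
    exact hgoal
  -- basic integrability
  have hvInt : IntegrableOn (fun x => v x ^ 2) (Ioo 0 L) :=
    ((hv.pow 2).integrableOn_Icc).mono_set Ioo_subset_Icc_self
  have hv'meas : AEStronglyMeasurable v' (volume.restrict (Ioo 0 L)) :=
    hv'.aestronglyMeasurable measurableSet_Ioo
  have hv'Int : IntegrableOn v' (Ioo 0 L) := by
    apply Integrable.mono' (g := fun x => (1 + v' x ^ 2)/2)
    · exact ((integrableOn_const (by simp [Real.volume_Ioo])).add hint).div_const 2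
    · exact hv'meas
    · refine Filter.Eventually.of_forall fun x => ?_
      rw [Real.norm_eq_abs]
      nlinarith [sq_nonneg (|v' x| - 1), sq_abs (v' x)]
  -- the key step on compact subintervals
  have hstep : ∀ a b : ℝ, 0 < a → a ≤ b → b < L →
      k^2 * (∫ x in Ioo a b, v x ^2) + (F b - F a) ≤ ∫ x in Ioo 0 L, v' x ^ 2 := by
    intro a b ha hab hb
    have hsub : Icc a b ⊆ Ioo 0 L := fun x hx => ⟨lt_of_lt_of_le ha hx.1, lt_of_le_of_lt hx.2 hb⟩
    have hsub2 : Icc a b ⊆ Icc 0 L := fun x hx => ⟨(hsub hx).1.le, (hsub hx).2.le⟩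
    have hvC : ContinuousOn v (Icc a b) := hv.mono hsub2
    have hv'C : ContinuousOn v' (Icc a b) := hv'.mono hsub
    have hsinC : ContinuousOn (fun x => Real.sin (k*x)) (Icc a b) :=
      (Real.continuous_sin.comp (continuous_const.mul continuous_id)).continuousOn
    have hcosC : ContinuousOn (fun x => Real.cos (k*x)) (Icc a b) :=
      (Real.continuous_cos.comp (continuous_const.mul continuous_id)).continuousOn
    have hsne : ∀ x ∈ Icc a b, Real.sin (k*x) ≠ 0 := fun x hx => (hsin x (hsub hx)).ne'
    have hFdC : ContinuousOn Fd (Icc a b) := by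
      rw [hFd]
      refine ContinuousOn.sub ?_ ?_
      · exact ((continuousOn_const.mul (hcosC.div hsinC hsne)).mul hvC).mul hv'C
      · exact (continuousOn_const.mul (hvC.pow 2)).div (hsinC.pow 2)
          (fun x hx => pow_ne_zero 2 (hsne x hx))
    have hgC : ContinuousOn (fun x => v' x ^2 - k^2 * v x ^2) (Icc a b) :=
      (hv'C.pow 2).sub (continuousOn_const.mul (hvC.pow 2))
    have huIcc : uIcc a b = Icc a b := uIcc_of_le hab
    have hFdInt : IntervalIntegrable Fd volume a b :=
      (huIcc ▸ hFdC).intervalIntegrable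
    have hgInt : IntervalIntegrable (fun x => v' x ^2 - k^2 * v x ^2) volume a b :=
      (huIcc ▸ hgC).intervalIntegrable
    have hv2Int : IntervalIntegrable (fun x => v x ^ 2) volume a b :=
      (huIcc ▸ (hvC.pow 2)).intervalIntegrable
    have hv'2Int : IntervalIntegrable (fun x => v' x ^ 2) volume a b :=
      (huIcc ▸ (hv'C.pow 2)).intervalIntegrable
    have hftc : ∫ x in a..b, Fd x = F b - F a :=
      intervalIntegral.integral_eq_sub_of_hasDerivAt
        (fun x hx => hFderiv x (hsub (huIcc ▸ hx))) hFdInt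
    have hmono : ∫ x in a..b, Fd x ≤ ∫ x in a..b, (v' x ^2 - k^2 * v x ^2) :=
      intervalIntegral.integral_mono_on hab hFdInt hgInt (fun x hx => hFle x (hsub hx))
    have hsplit : ∫ x in a..b, (v' x ^2 - k^2 * v x ^2)
        = (∫ x in a..b, v' x ^2) - k^2 * ∫ x in a..b, v x ^2 := by
      rw [intervalIntegral.integral_sub hv'2Int (hv2Int.const_mul _),
        intervalIntegral.integral_const_mul]
    have hIoo1 : ∫ x in a..b, v' x ^2 = ∫ x in Ioo a b, v' x ^2 := by
      rw [intervalIntegral.integral_of_le hab, integral_Ioc_eq_integral_Ioo]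
    have hIoo2 : ∫ x in a..b, v x ^2 = ∫ x in Ioo a b, v x ^2 := by
      rw [intervalIntegral.integral_of_le hab, integral_Ioc_eq_integral_Ioo]
    have hIooSub : Ioo a b ⊆ Ioo 0 L := fun x hx => hsub ⟨hx.1.le, hx.2.le⟩
    have hfull : ∫ x in Ioo a b, v' x ^2 ≤ ∫ x in Ioo 0 L, v' x ^2 :=
      setIntegral_mono_set hint
        (Filter.Eventually.of_forall fun x => sq_nonneg _)
        (HasSubset.Subset.eventuallyLE hIooSub)
    rw [hftc, hsplit, hIoo1, hIoo2] at hmono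
    have hkey : k ^ 2 * (∫ x in Ioo a b, v x ^ 2) + (F b - F a)
        ≤ ∫ x in Ioo a b, v' x ^ 2 := by linarith [hmono]
    exact hkey.trans hfull
  -- boundary estimates via Cauchy-Schwarz
  have hbound0 : ∀ a : ℝ, 0 < a → a < L → v a ^ 2 ≤ a * ∫ x in Ioo 0 a, v' x ^ 2 := by
    intro a ha haL
    have hIocSub : Ioc 0 a ⊆ Ioo 0 L := fun x hx => ⟨hx.1, lt_of_le_of_lt hx.2 haL⟩
    have hIooSub : Ioo 0 a ⊆ Ioo 0 L := fun x hx => ⟨hx.1, hx.2.trans haL⟩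
    have hvi : IntervalIntegrable v' volume 0 a :=
      (intervalIntegrable_iff_integrableOn_Ioc_of_le ha.le).2 (hv'Int.mono_set hIocSub)
    have hftc : ∫ x in (0:ℝ)..a, v' x = v a - v 0 :=
      intervalIntegral.integral_eq_sub_of_hasDeriv_right_of_le ha.le
        (hv.mono (Icc_subset_Icc le_rfl haL.le))
        (fun x hx => (hderiv x (hIooSub hx)).hasDerivWithinAt) hvi
    have hva : v a = ∫ x in Ioo 0 a, v' x := by
      rw [← integral_Ioc_eq_integral_Ioo, ← intervalIntegral.integral_of_le ha.le, hftc, h0,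
        sub_zero]
    have hcs := steklov_cs ha
      (hv'meas.mono_measure (Measure.restrict_mono hIooSub le_rfl))
      (hint.mono_set hIooSub)
    rw [hva]
    simpa using hcs
  have hboundL : ∀ b : ℝ, 0 < b → b < L → v b ^ 2 ≤ (L - b) * ∫ x in Ioo b L, v' x ^ 2 := by
    intro b hb hbL
    have hIocSub : Ioc b L ⊆ Ioo 0 L ∪ {L} := by
      intro x hx
      rcases eq_or_lt_of_le hx.2 with h | h
      · exact Or.inr (by simp [h])
      · exact Or.inl ⟨hb.trans hx.1, h⟩
    have hIooSub : Ioo b L ⊆ Ioo 0 L := fun x hx => ⟨hb.trans hx.1, hx.2⟩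
    have hvi : IntervalIntegrable v' volume b L := by
      refine (intervalIntegrable_iff_integrableOn_Ioc_of_le hbL.le).2 ?_
      have h1 : IntegrableOn v' (Ioo b L ∪ {L}) := by
        apply IntegrableOn.union (hv'Int.mono_set hIooSub)
        simp [integrableOn_singleton_iff]
      apply h1.mono_set
      intro x hx
      rcases eq_or_lt_of_le hx.2 with h | h
      · exact Or.inr (by simp [h])
      · exact Or.inl ⟨hx.1, h⟩
    have hftc : ∫ x in b..L, v' x = v L - v b :=
      intervalIntegral.integral_eq_sub_of_hasDeriv_right_of_le hbL.le
        (hv.mono (Icc_subset_Icc hb.le le_rfl))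
        (fun x hx => (hderiv x (hIooSub hx)).hasDerivWithinAt) hvi
    have hvb : v b = -∫ x in Ioo b L, v' x := by
      rw [← integral_Ioc_eq_integral_Ioo, ← intervalIntegral.integral_of_le hbL.le, hftc, hLv]
      ring
    have hcs := steklov_cs hbL
      (hv'meas.mono_measure (Measure.restrict_mono hIooSub le_rfl))
      (hint.mono_set hIooSub)
    rw [hvb, neg_pow]
    simpa using hcs
  -- F near the left endpoint
  have hFA : ∀ a : ℝ, 0 < a → a ≤ L/3 → 0 ≤ F a ∧ F a ≤ ∫ x in Ioo 0 a, v' x ^ 2 := by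
    intro a ha haL3
    have haL : a < L := lt_of_le_of_lt haL3 (by linarith)
    have ht : 0 < k*a := mul_pos hkpos ha
    have ht2 : k*a < Real.pi/2 := by
      have h1 : k*a ≤ k*(L/3) := mul_le_mul_of_nonneg_left haL3 hkpos.le
      have h2 : k*(L/3) = Real.pi/3 := by rw [show k*(L/3) = (k*L)/3 by ring, hkL]
      have := Real.pi_pos
      linarith
    have hs : 0 < Real.sin (k*a) := hsin a ⟨ha, haL⟩
    have hc : 0 ≤ Real.cos (k*a) :=
      Real.cos_nonneg_of_mem_Icc ⟨by linarith [Real.pi_pos], ht2.le⟩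
    have hnn : (0:ℝ) ≤ ∫ x in Ioo 0 a, v' x ^ 2 := integral_nonneg fun x => sq_nonneg _
    constructor
    · simp only [hFdef]
      exact mul_nonneg (mul_nonneg hkpos.le (div_nonneg hc hs.le)) (sq_nonneg _)
    · have hcot := steklov_cot_le ht ht2
      have hb := hbound0 a ha haL
      simp only [hFdef]
      calc k * (Real.cos (k*a) / Real.sin (k*a)) * v a ^ 2
          ≤ k * (1/(k*a)) * v a ^ 2 :=
            mul_le_mul_of_nonneg_right (mul_le_mul_of_nonneg_left hcot hkpos.le) (sq_nonneg _)
        _ = v a ^ 2 / a := by field_simp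
        _ ≤ ∫ x in Ioo 0 a, v' x ^ 2 := by rw [div_le_iff₀ ha]; linarith
  -- F near the right endpoint
  have hFB : ∀ b : ℝ, 2*L/3 ≤ b → b < L →
      -(∫ x in Ioo b L, v' x ^ 2) ≤ F b ∧ F b ≤ 0 := by
    intro b hb23 hbL
    have hb0 : 0 < b := by linarith
    have hu : 0 < L - b := by linarith
    have huL3 : L - b ≤ L/3 := by linarith
    have hsum : k*b + k*(L-b) = Real.pi := by rw [← hkL]; ring
    have hkb : k*b = Real.pi - k*(L-b) := by linarith
    have hcs : Real.cos (k*b) = - Real.cos (k*(L-b)) := by rw [hkb, Real.cos_pi_sub]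
    have hss : Real.sin (k*b) = Real.sin (k*(L-b)) := by rw [hkb, Real.sin_pi_sub]
    have ht : 0 < k*(L-b) := mul_pos hkpos hu
    have ht2 : k*(L-b) < Real.pi/2 := by
      have h1 : k*(L-b) ≤ k*(L/3) := mul_le_mul_of_nonneg_left huL3 hkpos.le
      have h2 : k*(L/3) = Real.pi/3 := by rw [show k*(L/3) = (k*L)/3 by ring, hkL]
      have := Real.pi_pos
      linarith
    have hspos : 0 < Real.sin (k*(L-b)) :=
      Real.sin_pos_of_pos_of_lt_pi ht (by linarith [Real.pi_pos])
    have hcpos : 0 ≤ Real.cos (k*(L-b)) :=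
      Real.cos_nonneg_of_mem_Icc ⟨by linarith [Real.pi_pos], ht2.le⟩
    have hnn : (0:ℝ) ≤ ∫ x in Ioo b L, v' x ^ 2 := integral_nonneg fun x => sq_nonneg _
    have hcot := steklov_cot_le ht ht2
    have hb' := hboundL b hb0 hbL
    constructor
    · simp only [hFdef]
      have heq : k * (Real.cos (k*b) / Real.sin (k*b)) * v b ^ 2
          = -(k * (Real.cos (k*(L-b)) / Real.sin (k*(L-b))) * v b ^ 2) := by
        rw [hcs, hss]; ring
      rw [heq, neg_le_neg_iff]
      calc k * (Real.cos (k*(L-b)) / Real.sin (k*(L-b))) * v b ^ 2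
          ≤ k * (1/(k*(L-b))) * v b ^ 2 :=
            mul_le_mul_of_nonneg_right (mul_le_mul_of_nonneg_left hcot hkpos.le) (sq_nonneg _)
        _ = v b ^ 2 / (L - b) := by field_simp
        _ ≤ ∫ x in Ioo b L, v' x ^ 2 := by rw [div_le_iff₀ hu]; linarith
    · simp only [hFdef]
      have hdiv : Real.cos (k*b) / Real.sin (k*b) ≤ 0 := by
        apply div_nonpos_of_nonpos_of_nonneg
        · rw [hcs]; linarith
        · exact (hsin b ⟨hb0, hbL⟩).le
      have h1 : 0 ≤ k * v b ^ 2 := mul_nonneg hkpos.le (sq_nonneg _)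
      nlinarith [hdiv, h1]
  -- sequences approaching the endpoints
  set A : ℕ → ℝ := fun n => L / (n+3) with hA
  set B : ℕ → ℝ := fun n => L - L / (n+3) with hB
  have hAeq : ∀ n : ℕ, A n = L / (n+3) := fun n => by simp only [hA]
  have hBAeq : ∀ n : ℕ, B n = L - L / (n+3) := fun n => by simp only [hB]
  clear_value A B
  have hApos : ∀ n, 0 < A n := by
    intro n; rw [hAeq]; positivity
  have hA3 : ∀ n, A n ≤ L/3 := by
    intro n
    rw [hAeq]
    apply div_le_div_of_nonneg_left hL.le (by norm_num)
    have : (0:ℝ) ≤ (n:ℝ) := Nat.cast_nonneg n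
    linarith
  have hAL : ∀ n, A n < L := fun n => lt_of_le_of_lt (hA3 n) (by linarith)
  have hAanti : Antitone A := by
    intro m n h
    rw [hAeq, hAeq]
    apply div_le_div_of_nonneg_left hL.le (by positivity)
    have : (m:ℝ) ≤ (n:ℝ) := Nat.cast_le.2 h
    linarith
  have hBA : ∀ n, B n = L - A n := fun n => by rw [hBAeq, hAeq]
  have hBlt : ∀ n, B n < L := by
    intro n; rw [hBA]; linarith [hApos n]
  have hB23 : ∀ n, 2*L/3 ≤ B n := by
    intro n; rw [hBA]; linarith [hA3 n]
  have hABle : ∀ n, A n ≤ B n := by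
    intro n; rw [hBA]; linarith [hA3 n]
  have hBmono : Monotone B := by
    intro m n h
    rw [hBA, hBA]
    linarith [hAanti h]
  -- a small archimedean helper
  have harch : ∀ x : ℝ, 0 < x → ∃ N : ℕ, ∀ n ≥ N, L / (n+3) < x := by
    intro x hx
    obtain ⟨N, hN⟩ := exists_nat_gt (L / x)
    refine ⟨N, fun n hn => ?_⟩
    have hNn : (N:ℝ) ≤ n := Nat.cast_le.2 hn
    have h1 : L / x < (n:ℝ) + 3 := by linarith
    rw [div_lt_iff₀ (by positivity)]
    calc L = x * (L / x) := by field_simp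
      _ < x * ((n:ℝ)+3) := by apply mul_lt_mul_of_pos_left h1 hx
  -- the tail integrals tend to zero
  have hGA : Tendsto (fun n => ∫ x in Ioo 0 (A n), v' x ^ 2) atTop (𝓝 0) := by
    have hanti : Antitone (fun n => Ioo (0:ℝ) (A n)) :=
      fun m n h => Ioo_subset_Ioo le_rfl (hAanti h)
    have hInter : ⋂ n, Ioo (0:ℝ) (A n) = ∅ := by
      rw [eq_empty_iff_forall_notMem]
      intro x hx
      simp only [mem_iInter, mem_Ioo] at hx
      have hx0 : 0 < x := (hx 0).1
      obtain ⟨N, hN⟩ := harch x hx0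
      have h2 := hN N le_rfl
      rw [← hAeq] at h2
      exact absurd (hx N).2 (not_lt.2 h2.le)
    have h := tendsto_setIntegral_of_antitone (fun n => measurableSet_Ioo) hanti
      ⟨0, hint.mono_set (Ioo_subset_Ioo le_rfl (hAL 0).le)⟩
    rw [hInter] at h
    simpa using h
  have hGB : Tendsto (fun n => ∫ x in Ioo (B n) L, v' x ^ 2) atTop (𝓝 0) := by
    have hanti : Antitone (fun n => Ioo (B n) L) :=
      fun m n h => Ioo_subset_Ioo (hBmono h) le_rfl
    have hInter : ⋂ n, Ioo (B n) L = ∅ := by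
      rw [eq_empty_iff_forall_notMem]
      intro x hx
      simp only [mem_iInter, mem_Ioo] at hx
      have hxL : x < L := (hx 0).2
      obtain ⟨N, hN⟩ := harch (L - x) (by linarith)
      have h1 := (hx N).1
      rw [hBA, hAeq] at h1
      have h2 := hN N le_rfl
      linarith
    have h := tendsto_setIntegral_of_antitone (fun n => measurableSet_Ioo) hanti
      ⟨0, hint.mono_set (fun x hx => ⟨lt_of_lt_of_le (by linarith [hB23 0]) hx.1.le, hx.2⟩)⟩
    rw [hInter] at h
    simpa using h
  -- F tends to zero along the sequences
  have hFA0 : Tendsto (fun n => F (A n)) atTop (𝓝 0) :=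
    squeeze_zero (fun n => (hFA _ (hApos n) (hA3 n)).1)
      (fun n => (hFA _ (hApos n) (hA3 n)).2) hGA
  have hFB0 : Tendsto (fun n => F (B n)) atTop (𝓝 0) := by
    have hneg : Tendsto (fun n => -(∫ x in Ioo (B n) L, v' x ^ 2)) atTop (𝓝 0) := by
      simpa using hGB.neg
    exact tendsto_of_tendsto_of_tendsto_of_le_of_le hneg tendsto_const_nhds
      (fun n => (hFB _ (hB23 n) (hBlt n)).1) (fun n => (hFB _ (hB23 n) (hBlt n)).2)
  -- the middle integrals tend to the full integral
  have hmonoS : Monotone (fun n => Ioo (A n) (B n)) :=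
    fun m n h => Ioo_subset_Ioo (hAanti h) (hBmono h)
  have hUnion : ⋃ n, Ioo (A n) (B n) = Ioo 0 L := by
    apply Subset.antisymm
    · refine iUnion_subset fun n x hx => ⟨(hApos n).trans hx.1, hx.2.trans (hBlt n)⟩
    · intro x hx
      obtain ⟨N1, hN1⟩ := harch x hx.1
      obtain ⟨N2, hN2⟩ := harch (L - x) (by linarith [hx.2])
      refine mem_iUnion.2 ⟨max N1 N2, ?_, ?_⟩
      · rw [hAeq]
        exact hN1 (max N1 N2) (le_max_left _ _)
      · rw [hBA, hAeq]
        have := hN2 (max N1 N2) (le_max_right _ _)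
        linarith
  have hTendInt : Tendsto (fun n => ∫ x in Ioo (A n) (B n), v x ^ 2) atTop
      (𝓝 (∫ x in Ioo 0 L, v x ^ 2)) := by
    have h := tendsto_setIntegral_of_monotone (fun n => measurableSet_Ioo) hmonoS
      (hUnion ▸ hvInt)
    rwa [hUnion] at h
  -- conclude
  have hfin : Tendsto (fun n => k^2 * (∫ x in Ioo (A n) (B n), v x ^ 2) + (F (B n) - F (A n)))
      atTop (𝓝 (k^2 * (∫ x in Ioo 0 L, v x ^ 2) + (0 - 0))) :=
    (hTendInt.const_mul _).add (hFB0.sub hFA0)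
  have hle := le_of_tendsto hfin
    (Eventually.of_forall fun n => hstep (A n) (B n) (hApos n) (hABle n) (hBlt n))
  have hkk : Real.pi^2 / L^2 = k^2 := by rw [hk, div_pow]
  rw [hkk]
  simpa using hle
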